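/- (Corollary 1.) There exist ℓ₀ ∈ ℝ and smooth functions R, K_ℓ, K_R : [ℓ₀,∞) → ℝ with R > 0 satisfying the decay conditions |R²/ℓ² − 1| = O(ℓ⁻¹), |H − 2/ℓ| = O(ℓ⁻²), |∂_ℓ H + 2/ℓ²| = O(ℓ⁻³), |K_ℓ|, |K_R| = O(ℓ⁻²), |∂_ℓ K_ℓ|, |∂_ℓ K_R| = O(ℓ⁻³), |trK| = O(ℓ⁻³), together with points ℓ** < ℓ' in [ℓ₀,∞) such that: ℓ** is a finitely stable MOTS (θ⁺(ℓ**) = 0 and ∂_ℓ^m θ⁺(ℓ**) > 0 for some m ≥ 1), θ⁺(ℓ') < 0 (ℓ' is a strictly outer trapped surface enclosing ℓ**), and there exists a blow-up solution for ℓ**. -/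

import Mathlib

open Filter Asymptotics Set Topology

/-- Mean curvature `H = 2 R' / R` of the spherically symmetric spheres. -/
noncomputable def Hf (R : ℝ → ℝ) : ℝ → ℝ := fun ℓ => 2 * deriv R ℓ / R ℓ

/-- `trK = K_ℓ + 2 K_R`. -/
def trKf (Kl KR : ℝ → ℝ) : ℝ → ℝ := fun ℓ => Kl ℓ + 2 * KR ℓ

/-- Outer expansion `θ⁺ = 2 K_R + H`. -/
noncomputable def thetaPlus (R KR : ℝ → ℝ) : ℝ → ℝ := fun ℓ => 2 * KR ℓ + Hf R ℓ

/-- Inner expansion `θ⁻ = 2 K_R − H`. -/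
noncomputable def thetaMinus (R KR : ℝ → ℝ) : ℝ → ℝ := fun ℓ => 2 * KR ℓ - Hf R ℓ

/-- The asymptotic flatness decay conditions (2.8)-(2.13) of the paper:
`|R²/ℓ² − 1| = O(ℓ⁻¹)`, `|H − 2/ℓ| = O(ℓ⁻²)`, `|∂_ℓ H + 2/ℓ²| = O(ℓ⁻³)`,
`|K_ℓ|, |K_R| = O(ℓ⁻²)`, `|∂_ℓ K_ℓ|, |∂_ℓ K_R| = O(ℓ⁻³)`, `|trK| = O(ℓ⁻³)`. -/
def JangDecay (R Kl KR : ℝ → ℝ) : Prop :=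
  (fun ℓ => R ℓ ^ 2 / ℓ ^ 2 - 1) =O[Filter.atTop] (fun ℓ : ℝ => ℓ⁻¹) ∧
  (fun ℓ => Hf R ℓ - 2 / ℓ) =O[Filter.atTop] (fun ℓ : ℝ => (ℓ ^ 2)⁻¹) ∧
  (fun ℓ => deriv (Hf R) ℓ + 2 / ℓ ^ 2) =O[Filter.atTop] (fun ℓ : ℝ => (ℓ ^ 3)⁻¹) ∧
  Kl =O[Filter.atTop] (fun ℓ : ℝ => (ℓ ^ 2)⁻¹) ∧
  KR =O[Filter.atTop] (fun ℓ : ℝ => (ℓ ^ 2)⁻¹) ∧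
  deriv Kl =O[Filter.atTop] (fun ℓ : ℝ => (ℓ ^ 3)⁻¹) ∧
  deriv KR =O[Filter.atTop] (fun ℓ : ℝ => (ℓ ^ 3)⁻¹) ∧
  trKf Kl KR =O[Filter.atTop] (fun ℓ : ℝ => (ℓ ^ 3)⁻¹)

/-- A blow-up solution for the surface `ℓ*`: a smooth solution `k` of the reduced
Jang equation `∂_ℓ k = −K_ℓ k² − H k + trK` on `[ℓ*,∞)` with `k(ℓ*) = −1`,
`|k(ℓ)| < 1` for all `ℓ > ℓ*`, and `k(ℓ) → 0` as `ℓ → ∞`. -/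
def IsBlowupSolution (R Kl KR : ℝ → ℝ) (ℓs : ℝ) (k : ℝ → ℝ) : Prop :=
  ContDiffOn ℝ (⊤ : ℕ∞) k (Set.Ici ℓs) ∧
  (∀ ℓ ∈ Set.Ici ℓs,
    HasDerivAt k (-(Kl ℓ) * k ℓ ^ 2 - Hf R ℓ * k ℓ + trKf Kl KR ℓ) ℓ) ∧
  k ℓs = -1 ∧
  (∀ ℓ, ℓs < ℓ → |k ℓ| < 1) ∧
  Filter.Tendsto k Filter.atTop (nhds 0)

/- ===================== auxiliary constructions ===================== -/

noncomputable def myR : ℝ → ℝ := fun l => Real.sqrt (l^2+1)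
noncomputable def myk : ℝ → ℝ :=
  fun l => (-15*l^6+18*l^5-14*l^4+16*l^2-40*l+19)/((l^2+1)^4)
noncomputable def myKR : ℝ → ℝ :=
  fun l => (-18*l^6-62*l^5+90*l^4-120*l^3+200*l^2-82*l-40)/(2*(l^2+1)^5)

lemma hasDerivAt_poly (c9 c8 c7 c6 c5 c4 c3 c2 c1 c0 : ℝ) (l : ℝ) :
    HasDerivAt (fun x : ℝ => c9*x^9+c8*x^8+c7*x^7+c6*x^6+c5*x^5+c4*x^4+c3*x^3+c2*x^2+c1*x+c0)
      (9*c9*l^8+8*c8*l^7+7*c7*l^6+6*c6*l^5+5*c5*l^4+4*c4*l^3+3*c3*l^2+2*c2*l+c1) l := by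
  have h := ((((((((HasDerivAt.const_mul c9 (hasDerivAt_pow 9 l)).fun_add
    (HasDerivAt.const_mul c8 (hasDerivAt_pow 8 l))).fun_add
    (HasDerivAt.const_mul c7 (hasDerivAt_pow 7 l))).fun_add
    (HasDerivAt.const_mul c6 (hasDerivAt_pow 6 l))).fun_add
    (HasDerivAt.const_mul c5 (hasDerivAt_pow 5 l))).fun_add
    (HasDerivAt.const_mul c4 (hasDerivAt_pow 4 l))).fun_add
    (HasDerivAt.const_mul c3 (hasDerivAt_pow 3 l))).fun_add
    (HasDerivAt.const_mul c2 (hasDerivAt_pow 2 l))).fun_add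
    (HasDerivAt.const_mul c1 (hasDerivAt_pow 1 l))
  have h2 := h.add_const c0
  refine (h2.congr_deriv (by push_cast; ring)).congr_of_eventuallyEq
    (Filter.Eventually.of_forall fun x => by ring)

lemma hasDerivAt_den (n : ℕ) (l : ℝ) :
    HasDerivAt (fun x : ℝ => (x^2+1)^n) (n*(l^2+1)^(n-1)*(2*l)) l := by
  have h1 : HasDerivAt (fun x:ℝ => x^2+1) (2*l) l := by
    simpa using (hasDerivAt_pow 2 l).add_const 1
  simpa using h1.fun_pow n

lemma myR_contDiff : ContDiff ℝ (⊤ : ℕ∞) myR := by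
  rw [contDiff_iff_contDiffAt]
  intro x
  exact ContDiffAt.comp x (Real.contDiffAt_sqrt (by positivity)) (by fun_prop)

lemma myR_hasDeriv (l : ℝ) : HasDerivAt myR (l / Real.sqrt (l^2+1)) l := by
  have h1 : HasDerivAt (fun x:ℝ => x^2+1) (2*l) l := by
    simpa using (hasDerivAt_pow 2 l).add_const 1
  have h2 := (Real.hasDerivAt_sqrt (by positivity : l^2+1 ≠ 0)).comp l h1
  have hs : (0:ℝ) < Real.sqrt (l^2+1) := Real.sqrt_pos.mpr (by positivity)
  refine h2.congr_deriv ?_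
  field_simp

lemma Hf_eq : Hf myR = fun l => 2*l/(l^2+1) := by
  funext l
  have hd := (myR_hasDeriv l).deriv
  have hs : (0:ℝ) < Real.sqrt (l^2+1) := Real.sqrt_pos.mpr (by positivity)
  have hss : Real.sqrt (l^2+1) * Real.sqrt (l^2+1) = l^2+1 := Real.mul_self_sqrt (by positivity)
  simp only [Hf, hd, myR]
  rw [← mul_div_assoc, div_div, hss]

lemma hasDerivAt_H2 (l : ℝ) :
    HasDerivAt (fun x : ℝ => 2*x/(x^2+1)) ((2-2*l^2)/((l^2+1)^2)) l := by
  have hN : HasDerivAt (fun x:ℝ => 2*x) (2:ℝ) l := by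
    simpa using HasDerivAt.const_mul (2:ℝ) (hasDerivAt_id l)
  have hD : HasDerivAt (fun x:ℝ => x^2+1) (2*l) l := by
    simpa using (hasDerivAt_pow 2 l).add_const 1
  have h := hN.fun_div hD (by positivity)
  refine h.congr_deriv ?_
  have h1 : ((l:ℝ)^2+1) ≠ 0 := by positivity
  field_simp; ring

lemma deriv_Hf_eq : deriv (Hf myR) = fun l => (2-2*l^2)/((l^2+1)^2) := by
  rw [Hf_eq]
  funext l
  exact (hasDerivAt_H2 l).deriv

lemma hasDerivAt_Nk (l : ℝ) :
    HasDerivAt (fun x:ℝ => -15*x^6+18*x^5-14*x^4+16*x^2-40*x+19)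
      (-90*l^5+90*l^4-56*l^3+32*l-40) l := by
  have he : (fun x:ℝ => -15*x^6+18*x^5-14*x^4+16*x^2-40*x+19)
      = (fun x:ℝ => 0*x^9+0*x^8+0*x^7+(-15)*x^6+18*x^5+(-14)*x^4+0*x^3+16*x^2+(-40)*x+19) := by
    funext x; ring
  rw [he]
  convert hasDerivAt_poly 0 0 0 (-15) 18 (-14) 0 16 (-40) 19 l using 1
  ring

lemma hasDerivAt_myk (l : ℝ) :
    HasDerivAt myk ((30*l^7-54*l^6-34*l^5+90*l^4-152*l^3+280*l^2-120*l-40)/((l^2+1)^5)) l := by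
  have hd : ((l:ℝ)^2+1)^4 ≠ 0 := by positivity
  have h := (hasDerivAt_Nk l).fun_div (hasDerivAt_den 4 l) hd
  refine h.congr_deriv ?_
  have h1 : ((l:ℝ)^2+1) ≠ 0 := by positivity
  field_simp
  ring

lemma hasDerivAt_NR (l : ℝ) :
    HasDerivAt (fun x:ℝ => -18*x^6-62*x^5+90*x^4-120*x^3+200*x^2-82*x-40)
      (-108*l^5-310*l^4+360*l^3-360*l^2+400*l-82) l := by
  have he : (fun x:ℝ => -18*x^6-62*x^5+90*x^4-120*x^3+200*x^2-82*x-40)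
      = (fun x:ℝ => 0*x^9+0*x^8+0*x^7+(-18)*x^6+(-62)*x^5+90*x^4+(-120)*x^3+200*x^2+(-82)*x+(-40)) := by
    funext x; ring
  rw [he]
  convert hasDerivAt_poly 0 0 0 (-18) (-62) 90 (-120) 200 (-82) (-40) l using 1
  ring

lemma hasDerivAt_myKR (l : ℝ) :
    HasDerivAt myKR
      ((72*l^7+310*l^6-648*l^5+530*l^4-1240*l^3+378*l^2+800*l-82)/(2*(l^2+1)^6)) l := by
  have hd : (2:ℝ)*((l:ℝ)^2+1)^5 ≠ 0 := by positivity
  have hD : HasDerivAt (fun x:ℝ => 2*(x^2+1)^5) (2*((5:ℕ)*(l^2+1)^(5-1)*(2*l))) l :=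
    HasDerivAt.const_mul 2 (hasDerivAt_den 5 l)
  have h := (hasDerivAt_NR l).fun_div hD hd
  refine h.congr_deriv ?_
  have h1 : ((l:ℝ)^2+1) ≠ 0 := by positivity
  field_simp
  ring

lemma deriv_myKR_eq : deriv myKR
    = fun l => (72*l^7+310*l^6-648*l^5+530*l^4-1240*l^3+378*l^2+800*l-82)/(2*(l^2+1)^6) := by
  funext l
  exact (hasDerivAt_myKR l).deriv

lemma hasDerivAt_T (l : ℝ) :
    HasDerivAt (fun x:ℝ => 2*x^9+8*x^7-18*x^6-50*x^5+90*x^4-112*x^3+200*x^2-80*x-40)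
      (18*l^8+56*l^6-108*l^5-250*l^4+360*l^3-336*l^2+400*l-80) l := by
  have he : (fun x:ℝ => 2*x^9+8*x^7-18*x^6-50*x^5+90*x^4-112*x^3+200*x^2-80*x-40)
      = (fun x:ℝ => 2*x^9+0*x^8+8*x^7+(-18)*x^6+(-50)*x^5+90*x^4+(-112)*x^3+200*x^2+(-80)*x+(-40)) := by
    funext x; ring
  rw [he]
  convert hasDerivAt_poly 2 0 8 (-18) (-50) 90 (-112) 200 (-80) (-40) l using 1
  ring

lemma thetaPlus_eq : thetaPlus myR myKR
    = fun l => (2*l^9+8*l^7-18*l^6-50*l^5+90*l^4-112*l^3+200*l^2-80*l-40)/((l^2+1)^5) := by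
  funext l
  have h1 : ((l:ℝ)^2+1) ≠ 0 := by positivity
  simp only [thetaPlus, myKR, Hf_eq]
  field_simp
  ring

lemma q_pos (l : ℝ) (hl : 1 ≤ l) : 0 < l^6+2*l^5-8*l^4+20 := by
  nlinarith [sq_nonneg (5*l^2-8), sq_nonneg (l^2*(5*l^2+5*l-13)),
    mul_nonneg (sub_nonneg.2 hl) (sq_nonneg (l^2-1)),
    mul_nonneg (sub_nonneg.2 hl) (sq_nonneg (l^2+l)), sq_nonneg (l^3+l^2-5*l),
    sq_nonneg (l-1), mul_nonneg (mul_nonneg (sub_nonneg.2 hl) (sub_nonneg.2 hl)) (sq_nonneg l),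
    mul_nonneg (sub_nonneg.2 hl) (sq_nonneg l)]

lemma Nk_neg (l : ℝ) (hl : 1 ≤ l) : -15*l^6+18*l^5-14*l^4+16*l^2-40*l+19 < 0 := by
  nlinarith [sq_nonneg (l-1), sq_nonneg (l^2-l), sq_nonneg (l^3-l^2),
    mul_nonneg (sub_nonneg.2 hl) (sq_nonneg l),
    pow_le_pow_left₀ (by linarith : (0:ℝ) ≤ 1) hl 2]

lemma powl (l : ℝ) (hl : 1 ≤ l) {i j : ℕ} (h : i ≤ j) : l^i ≤ l^j :=
  pow_le_pow_right₀ hl h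

lemma myk_contDiff : ContDiff ℝ (⊤ : ℕ∞) myk :=
  ContDiff.div (by fun_prop) (by fun_prop) (fun x => by positivity)

lemma myKR_contDiff : ContDiff ℝ (⊤ : ℕ∞) myKR :=
  ContDiff.div (by fun_prop) (by fun_prop) (fun x => by positivity)

lemma isBigO_help {f g : ℝ → ℝ} (C : ℝ) (h : ∀ l : ℝ, 1 ≤ l → |f l| ≤ C * |g l|) :
    f =O[Filter.atTop] g :=
  Asymptotics.IsBigO.of_bound C (by
    filter_upwards [Filter.eventually_ge_atTop 1] with l hl
    simpa [Real.norm_eq_abs] using h l hl)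

lemma frac_bound {N D C P : ℝ} (hD : 0 < D) (hP : 0 < P)
    (h1 : N * P ≤ C * D) (h2 : -N * P ≤ C * D) : |N / D| ≤ C * |P⁻¹| := by
  rw [abs_div, abs_of_pos hD, abs_of_pos (inv_pos.2 hP), ← div_eq_mul_inv,
    div_le_div_iff₀ hD hP]
  rcases abs_cases N with ⟨h, _⟩ | ⟨h, _⟩ <;> rw [h] <;> nlinarith

lemma decay1 : (fun l => myR l ^ 2 / l ^ 2 - 1) =O[Filter.atTop] (fun l : ℝ => l⁻¹) := by
  apply isBigO_help 1
  intro l hl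
  have hl0 : (0:ℝ) < l := by linarith
  have he : myR l ^ 2 / l ^ 2 - 1 = 1/l^2 := by
    simp only [myR]
    rw [Real.sq_sqrt (by positivity)]
    field_simp; ring
  rw [he]
  have := frac_bound (N := 1) (D := l^2) (C := 1) (P := l)
    (by positivity) hl0 (by nlinarith) (by nlinarith)
  simpa using this

lemma decay2 : (fun l => Hf myR l - 2 / l) =O[Filter.atTop] (fun l : ℝ => (l ^ 2)⁻¹) := by
  apply isBigO_help 2
  intro l hl
  have hl0 : (0:ℝ) < l := by linarith
  have he : Hf myR l - 2/l = -2/(l*(l^2+1)) := by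
    rw [Hf_eq]
    field_simp
    ring
  rw [he]
  exact frac_bound (by positivity) (by positivity) (by nlinarith) (by nlinarith)

lemma decay3 :
    (fun l => deriv (Hf myR) l + 2 / l ^ 2) =O[Filter.atTop] (fun l : ℝ => (l ^ 3)⁻¹) := by
  apply isBigO_help 8
  intro l hl
  have hl0 : (0:ℝ) < l := by linarith
  have he : deriv (Hf myR) l + 2/l^2 = (6*l^2+2)/(l^2*(l^2+1)^2) := by
    rw [deriv_Hf_eq]
    field_simp
    ring
  rw [he]
  refine frac_bound (by positivity) (by positivity) ?_ ?_ <;> nlinarith [sq_nonneg l,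
    mul_nonneg (mul_nonneg hl0.le hl0.le) hl0.le, pow_nonneg hl0.le 5, powl l hl (show 5 ≤ 7 by norm_num), powl l hl (show 3 ≤ 7 by norm_num), pow_nonneg hl0.le 7, pow_nonneg hl0.le 6]

lemma decay5 : myKR =O[Filter.atTop] (fun l : ℝ => (l ^ 2)⁻¹) := by
  apply isBigO_help 306
  intro l hl
  have hl0 : (0:ℝ) < l := by linarith
  simp only [myKR]
  refine frac_bound (by positivity) (by positivity) ?_ ?_ <;>
  nlinarith [powl l hl (show 8 ≤ 10 by norm_num), powl l hl (show 7 ≤ 10 by norm_num),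
    powl l hl (show 6 ≤ 10 by norm_num), powl l hl (show 5 ≤ 10 by norm_num),
    powl l hl (show 4 ≤ 10 by norm_num), powl l hl (show 3 ≤ 10 by norm_num),
    powl l hl (show 2 ≤ 10 by norm_num),
    pow_nonneg hl0.le 2, pow_nonneg hl0.le 3, pow_nonneg hl0.le 4, pow_nonneg hl0.le 5,
    pow_nonneg hl0.le 6, pow_nonneg hl0.le 7, pow_nonneg hl0.le 8, pow_nonneg hl0.le 10]

lemma decay7 : deriv myKR =O[Filter.atTop] (fun l : ℝ => (l ^ 3)⁻¹) := by
  rw [deriv_myKR_eq]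
  apply isBigO_help 2030
  intro l hl
  have hl0 : (0:ℝ) < l := by linarith
  refine frac_bound (by positivity) (by positivity) ?_ ?_ <;>
  nlinarith [powl l hl (show 10 ≤ 12 by norm_num), powl l hl (show 9 ≤ 12 by norm_num),
    powl l hl (show 8 ≤ 12 by norm_num), powl l hl (show 7 ≤ 12 by norm_num),
    powl l hl (show 6 ≤ 12 by norm_num), powl l hl (show 5 ≤ 12 by norm_num),
    powl l hl (show 4 ≤ 12 by norm_num), powl l hl (show 3 ≤ 12 by norm_num),
    pow_nonneg hl0.le 3, pow_nonneg hl0.le 4, pow_nonneg hl0.le 5, pow_nonneg hl0.le 6,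
    pow_nonneg hl0.le 7, pow_nonneg hl0.le 8, pow_nonneg hl0.le 9, pow_nonneg hl0.le 10,
    pow_nonneg hl0.le 12]

lemma decay8 : trKf (fun _ => 0) myKR =O[Filter.atTop] (fun l : ℝ => (l ^ 3)⁻¹) := by
  apply isBigO_help 612
  intro l hl
  have hl0 : (0:ℝ) < l := by linarith
  have he : trKf (fun _ => 0) myKR l
      = (-18*l^6-62*l^5+90*l^4-120*l^3+200*l^2-82*l-40)/((l^2+1)^5) := by
    simp only [trKf, myKR]
    have h1 : ((l:ℝ)^2+1) ≠ 0 := by positivity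
    field_simp
    ring
  rw [he]
  refine frac_bound (by positivity) (by positivity) ?_ ?_ <;>
  nlinarith [powl l hl (show 9 ≤ 10 by norm_num), powl l hl (show 8 ≤ 10 by norm_num),
    powl l hl (show 7 ≤ 10 by norm_num), powl l hl (show 6 ≤ 10 by norm_num),
    powl l hl (show 5 ≤ 10 by norm_num), powl l hl (show 4 ≤ 10 by norm_num),
    powl l hl (show 3 ≤ 10 by norm_num),
    pow_nonneg hl0.le 3, pow_nonneg hl0.le 4, pow_nonneg hl0.le 5, pow_nonneg hl0.le 6,
    pow_nonneg hl0.le 7, pow_nonneg hl0.le 8, pow_nonneg hl0.le 9, pow_nonneg hl0.le 10]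

lemma theta_at_one : thetaPlus myR myKR 1 = 0 := by
  rw [thetaPlus_eq]; norm_num

lemma theta_deriv_pos : 0 < iteratedDeriv 1 (thetaPlus myR myKR) 1 := by
  rw [iteratedDeriv_one, thetaPlus_eq]
  have hD := hasDerivAt_den 5 (1:ℝ)
  have h := ((hasDerivAt_T 1).fun_div hD (by norm_num)).deriv
  rw [h]
  norm_num

lemma theta_at_32 : thetaPlus myR myKR (3/2) < 0 := by
  rw [thetaPlus_eq]; norm_num

lemma myk_ode (l : ℝ) :
    HasDerivAt myk (-((fun _:ℝ => (0:ℝ)) l) * myk l ^ 2 - Hf myR l * myk l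
      + trKf (fun _ => 0) myKR l) l := by
  have h := hasDerivAt_myk l
  convert h using 1
  have h1 : ((l:ℝ)^2+1) ≠ 0 := by positivity
  simp only [Hf_eq, myk, myKR, trKf]
  field_simp
  ring

lemma myk_at_one : myk 1 = -1 := by
  simp only [myk]; norm_num

lemma myk_abs_lt (l : ℝ) (hl : 1 < l) : |myk l| < 1 := by
  have hl1 : (1:ℝ) ≤ l := hl.le
  have hD : (0:ℝ) < (l^2+1)^4 := by positivity
  rw [abs_lt]
  constructor
  · simp only [myk]
    rw [lt_div_iff₀ hD]
    have hq := q_pos l hl1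
    nlinarith [mul_pos (mul_pos (sub_pos.2 hl) (sub_pos.2 hl)) hq]
  · exact lt_trans (div_neg_of_neg_of_pos (Nk_neg l hl1) hD) one_pos

lemma myk_tendsto : Filter.Tendsto myk Filter.atTop (nhds 0) := by
  refine squeeze_zero_norm' (a := fun l : ℝ => 122/l) ?_ ?_
  · filter_upwards [Filter.eventually_ge_atTop 1] with l hl
    have hl0 : (0:ℝ) < l := by linarith
    have hD : (0:ℝ) < (l^2+1)^4 := by positivity
    rw [Real.norm_eq_abs]
    simp only [myk]
    rw [abs_div, abs_of_pos hD, div_le_div_iff₀ hD hl0]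
    rcases abs_cases (-15*l^6+18*l^5-14*l^4+16*l^2-40*l+19) with ⟨h, _⟩ | ⟨h, _⟩ <;> rw [h] <;>
    nlinarith [powl l hl (show 7 ≤ 8 by norm_num), powl l hl (show 6 ≤ 8 by norm_num),
      powl l hl (show 5 ≤ 8 by norm_num), powl l hl (show 3 ≤ 8 by norm_num),
      powl l hl (show 1 ≤ 8 by norm_num), pow_nonneg hl0.le 3, pow_nonneg hl0.le 5,
      pow_nonneg hl0.le 6, pow_nonneg hl0.le 7, pow_nonneg hl0.le 8, pow_nonneg hl0.le 2,
      pow_nonneg hl0.le 4]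
  · exact tendsto_const_nhds.div_atTop Filter.tendsto_id


/-- Corollary 1: there exist asymptotically flat spherically symmetric data and a
finitely stable MOTS `ℓ**` lying inside a strictly outer trapped surface `ℓ'`, for
which a blow-up solution exists. -/
theorem exists_blowup_for_mots_inside_outer_trapped :
    ∃ (ℓ₀ : ℝ) (R Kl KR : ℝ → ℝ) (ℓss ℓ' : ℝ),
      ContDiff ℝ (⊤ : ℕ∞) R ∧ ContDiff ℝ (⊤ : ℕ∞) Kl ∧ ContDiff ℝ (⊤ : ℕ∞) KR ∧
      (∀ ℓ ∈ Set.Ici ℓ₀, 0 < R ℓ) ∧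
      JangDecay R Kl KR ∧
      ℓ₀ ≤ ℓss ∧ ℓss < ℓ' ∧
      thetaPlus R KR ℓss = 0 ∧
      (∃ m, 1 ≤ m ∧ 0 < iteratedDeriv m (thetaPlus R KR) ℓss) ∧
      thetaPlus R KR ℓ' < 0 ∧
      ∃ k : ℝ → ℝ, IsBlowupSolution R Kl KR ℓss k := by

  refine ⟨1, myR, (fun _ => 0), myKR, 1, 3/2, myR_contDiff, contDiff_const, myKR_contDiff,
    fun l _ => by simp only [myR]; positivity,
    ⟨decay1, decay2, decay3, isBigO_zero _ _, decay5, ?_, decay7, decay8⟩,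
    le_refl 1, by norm_num, theta_at_one, ⟨1, le_refl 1, theta_deriv_pos⟩, theta_at_32,
    myk, myk_contDiff.contDiffOn, fun l _ => myk_ode l, myk_at_one,
    myk_abs_lt, myk_tendsto⟩
  rw [deriv_const']
  exact isBigO_zero _ _
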